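/- Let R be a ring and I an ideal of R possessing a polynormal generating sequence u_1, ..., u_n (i.e., {u_1,...,u_n} generates I as a two-sided ideal and for each i, the image of u_i in R modulo the ideal generated by u_1,...,u_{i-1} is normal). Then I is generated as a left ideal of R by {u_1, ..., u_n}, and also generated as a right ideal by the same set. -/

import Mathlib

open TwoSidedIdeal

private lemma polynormal_left_aux {R : Type*} [Ring R] {n : ℕ} (u : Fin n → R)
    (hn : ∀ i : Fin n, ∀ r : R, ∃ s : R,
      u i * r - s * u i ∈ TwoSidedIdeal.span {x | ∃ j : Fin n, j < i ∧ x = u j}) :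
    ∀ m : ℕ, (TwoSidedIdeal.span {x | ∃ j : Fin n, (j : ℕ) < m ∧ x = u j} : Set R)
      = (Submodule.span R {x | ∃ j : Fin n, (j : ℕ) < m ∧ x = u j} : Submodule R R) := by
  intro m
  induction m with
  | zero =>
    have hS : {x : R | ∃ j : Fin n, (j : ℕ) < 0 ∧ x = u j} = ∅ := by
      ext x; simp
    rw [hS]
    apply Set.Subset.antisymm
    · intro x hx
      have : x ∈ (⊥ : TwoSidedIdeal R) := mem_span_iff.mp hx ⊥ (by simp)
      rw [TwoSidedIdeal.mem_bot] at this
      simp [this, Submodule.zero_mem]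
    · intro x hx
      rw [SetLike.mem_coe, Submodule.span_empty, Submodule.mem_bot] at hx
      rw [hx]; exact TwoSidedIdeal.zero_mem _
  | succ m ih =>
    set S : Set R := {x | ∃ j : Fin n, (j : ℕ) < m + 1 ∧ x = u j} with hSdef
    set M : Submodule R R := Submodule.span R S with hMdef
    have hSm_sub : {x : R | ∃ j : Fin n, (j : ℕ) < m ∧ x = u j} ⊆ S := by
      rintro x ⟨j, hj, rfl⟩; exact ⟨j, Nat.lt_succ_of_lt hj, rfl⟩
    have hSmM : (TwoSidedIdeal.span {x | ∃ j : Fin n, (j : ℕ) < m ∧ x = u j} : Set R)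
        ⊆ (M : Set R) := by
      rw [ih]
      exact Submodule.span_mono hSm_sub
    -- M is closed under right multiplication
    have hrmul : ∀ x ∈ M, ∀ r : R, x * r ∈ M := by
      intro x hx
      induction hx using Submodule.span_induction with
      | mem x hx =>
        obtain ⟨j, hj, rfl⟩ := hx
        intro r
        obtain ⟨s, hs⟩ := hn j r
        have hsub : {x : R | ∃ k : Fin n, k < j ∧ x = u k}
            ⊆ {x : R | ∃ k : Fin n, (k : ℕ) < m ∧ x = u k} := by
          rintro x ⟨k, hk, rfl⟩
          exact ⟨k, lt_of_lt_of_le hk (Nat.lt_succ_iff.mp hj), rfl⟩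
        have ht : u j * r - s * u j ∈ M :=
          hSmM (TwoSidedIdeal.span_mono hsub hs)
        have hsu : s * u j ∈ M := by
          have : u j ∈ M := Submodule.subset_span ⟨j, hj, rfl⟩
          simpa using M.smul_mem s this
        have : u j * r = s * u j + (u j * r - s * u j) := by abel
        rw [this]
        exact M.add_mem hsu ht
      | zero => intro r; simp [M.zero_mem]
      | add x y _ _ hx hy =>
        intro r; rw [add_mul]; exact M.add_mem (hx r) (hy r)
      | smul a x _ hx =>
        intro r
        have : (a • x) * r = a • (x * r) := by
          simp [smul_eq_mul, mul_assoc]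
        rw [this]
        exact M.smul_mem a (hx r)
    -- M as a two-sided ideal
    let J : TwoSidedIdeal R := TwoSidedIdeal.mk' (M : Set R) M.zero_mem
      (fun hx hy => M.add_mem hx hy) (fun hx => M.neg_mem hx)
      (fun {x y} hy => by simpa using M.smul_mem x hy)
      (fun {x y} hx => hrmul _ hx y)
    apply Set.Subset.antisymm
    · intro x hx
      have : x ∈ J := mem_span_iff.mp hx J (by
        intro y hy
        rw [SetLike.mem_coe, TwoSidedIdeal.mem_mk']
        exact Submodule.subset_span hy)
      rwa [TwoSidedIdeal.mem_mk'] at this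
    · intro x hx
      rw [SetLike.mem_coe] at hx
      induction hx using Submodule.span_induction with
      | mem x hx => exact subset_span hx
      | zero => exact TwoSidedIdeal.zero_mem _
      | add x y _ _ hx hy => exact TwoSidedIdeal.add_mem _ hx hy
      | smul a x _ hx => exact TwoSidedIdeal.mul_mem_left _ _ _ hx

private lemma polynormal_right_aux {R : Type*} [Ring R] {n : ℕ} (u : Fin n → R)
    (hn : ∀ i : Fin n, ∀ r : R, ∃ s : R,
      r * u i - u i * s ∈ TwoSidedIdeal.span {x | ∃ j : Fin n, j < i ∧ x = u j}) :
    ∀ m : ℕ, (TwoSidedIdeal.span {x | ∃ j : Fin n, (j : ℕ) < m ∧ x = u j} : Set R)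
      = (Submodule.span Rᵐᵒᵖ {x | ∃ j : Fin n, (j : ℕ) < m ∧ x = u j} : Submodule Rᵐᵒᵖ R) := by
  intro m
  induction m with
  | zero =>
    have hS : {x : R | ∃ j : Fin n, (j : ℕ) < 0 ∧ x = u j} = ∅ := by
      ext x; simp
    rw [hS]
    apply Set.Subset.antisymm
    · intro x hx
      have : x ∈ (⊥ : TwoSidedIdeal R) := mem_span_iff.mp hx ⊥ (by simp)
      rw [TwoSidedIdeal.mem_bot] at this
      simp [this, Submodule.zero_mem]
    · intro x hx
      rw [SetLike.mem_coe, Submodule.span_empty, Submodule.mem_bot] at hx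
      rw [hx]; exact TwoSidedIdeal.zero_mem _
  | succ m ih =>
    set S : Set R := {x | ∃ j : Fin n, (j : ℕ) < m + 1 ∧ x = u j} with hSdef
    set M : Submodule Rᵐᵒᵖ R := Submodule.span Rᵐᵒᵖ S with hMdef
    have hSm_sub : {x : R | ∃ j : Fin n, (j : ℕ) < m ∧ x = u j} ⊆ S := by
      rintro x ⟨j, hj, rfl⟩; exact ⟨j, Nat.lt_succ_of_lt hj, rfl⟩
    have hSmM : (TwoSidedIdeal.span {x | ∃ j : Fin n, (j : ℕ) < m ∧ x = u j} : Set R)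
        ⊆ (M : Set R) := by
      rw [ih]
      exact Submodule.span_mono hSm_sub
    -- M is closed under left multiplication
    have hlmul : ∀ x ∈ M, ∀ r : R, r * x ∈ M := by
      intro x hx
      induction hx using Submodule.span_induction with
      | mem x hx =>
        obtain ⟨j, hj, rfl⟩ := hx
        intro r
        obtain ⟨s, hs⟩ := hn j r
        have hsub : {x : R | ∃ k : Fin n, k < j ∧ x = u k}
            ⊆ {x : R | ∃ k : Fin n, (k : ℕ) < m ∧ x = u k} := by
          rintro x ⟨k, hk, rfl⟩
          exact ⟨k, lt_of_lt_of_le hk (Nat.lt_succ_iff.mp hj), rfl⟩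
        have ht : r * u j - u j * s ∈ M :=
          hSmM (TwoSidedIdeal.span_mono hsub hs)
        have hsu : u j * s ∈ M := by
          have : u j ∈ M := Submodule.subset_span ⟨j, hj, rfl⟩
          simpa [op_smul_eq_mul] using M.smul_mem (MulOpposite.op s) this
        have : r * u j = u j * s + (r * u j - u j * s) := by abel
        rw [this]
        exact M.add_mem hsu ht
      | zero => intro r; simp [M.zero_mem]
      | add x y _ _ hx hy =>
        intro r; rw [mul_add]; exact M.add_mem (hx r) (hy r)
      | smul a x _ hx =>
        intro r
        have : r * (a • x) = a • (r * x) := by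
          simp [MulOpposite.smul_eq_mul_unop, mul_assoc]
        rw [this]
        exact M.smul_mem a (hx r)
    let J : TwoSidedIdeal R := TwoSidedIdeal.mk' (M : Set R) M.zero_mem
      (fun hx hy => M.add_mem hx hy) (fun hx => M.neg_mem hx)
      (fun {x y} hy => hlmul _ hy x)
      (fun {x y} hx => by
        simpa [op_smul_eq_mul] using M.smul_mem (MulOpposite.op y) hx)
    apply Set.Subset.antisymm
    · intro x hx
      have : x ∈ J := mem_span_iff.mp hx J (by
        intro y hy
        rw [SetLike.mem_coe, TwoSidedIdeal.mem_mk']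
        exact Submodule.subset_span hy)
      rwa [TwoSidedIdeal.mem_mk'] at this
    · intro x hx
      rw [SetLike.mem_coe] at hx
      induction hx using Submodule.span_induction with
      | mem x hx => exact subset_span hx
      | zero => exact TwoSidedIdeal.zero_mem _
      | add x y _ _ hx hy => exact TwoSidedIdeal.add_mem _ hx hy
      | smul a x _ hx =>
        exact TwoSidedIdeal.mul_mem_right _ _ _ hx

/-- An ideal with a polynormal generating sequence is generated by that set
both as a left ideal and as a right ideal. -/
theorem polynormal_left_right_generation {R : Type*} [Ring R] (n : ℕ) (u : Fin n → R)
    (I : TwoSidedIdeal R)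
    (hgen : I = TwoSidedIdeal.span (Set.range u))
    (hnorm : ∀ i : Fin n,
      (∀ r : R, ∃ s : R,
        u i * r - s * u i ∈ TwoSidedIdeal.span {x | ∃ j : Fin n, j < i ∧ x = u j}) ∧
      (∀ r : R, ∃ s : R,
        r * u i - u i * s ∈ TwoSidedIdeal.span {x | ∃ j : Fin n, j < i ∧ x = u j})) :
    (I : Set R) = (Submodule.span R (Set.range u) : Submodule R R) ∧
    (I : Set R) = (Submodule.span Rᵐᵒᵖ (Set.range u) : Submodule Rᵐᵒᵖ R) := by
  have hSn : {x : R | ∃ j : Fin n, (j : ℕ) < n ∧ x = u j} = Set.range u := by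
    ext x
    constructor
    · rintro ⟨j, _, rfl⟩; exact ⟨j, rfl⟩
    · rintro ⟨j, rfl⟩; exact ⟨j, j.isLt, rfl⟩
  constructor
  · have := polynormal_left_aux u (fun i => (hnorm i).1) n
    rw [hSn] at this
    rw [hgen, this]
  · have := polynormal_right_aux u (fun i => (hnorm i).2) n
    rw [hSn] at this
    rw [hgen, this]
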